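/- There exists a constant C(p) > 0, depending only on p and independent of k and of the choices of the intervals I(J), such that for every K ∈ 𝐊, every subinterval L of K sharing an endpoint with K, and every subinterval L' of L sharing an endpoint with K, one has ⟨w_k⟩_{L'} ≤ C(p)⟨w_k⟩_L and ⟨σ_k⟩_{L'} ≤ C(p)⟨σ_k⟩_L. -/

import Mathlib

open MeasureTheory Set Filter

noncomputable section

namespace RTpaper

/-- The half-open interval `[a, b)` represented by the pair `(a, b)`. -/
def ivSet (I : ℝ × ℝ) : Set ℝ := Set.Ico I.1 I.2

/-- The length of the interval represented by `I`. -/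
def len (I : ℝ × ℝ) : ℝ := I.2 - I.1

/-- The middle triadic child of an interval. -/
def mid (I : ℝ × ℝ) : ℝ × ℝ := (I.1 + (I.2 - I.1) / 3, I.2 - (I.2 - I.1) / 3)

/-- The families `𝐊ᵢ` of the Reguera–Thiele construction. -/
def Kfam (k : ℕ) : ℕ → Set (ℝ × ℝ)
  | 0 => {((0 : ℝ), (1 : ℝ))}
  | (i + 1) =>
      {I | ∃ K ∈ Kfam k i, ∃ j : ℕ, j < 3 ^ (k - 1) ∧
        I = ((mid K).1 + (j : ℝ) * ((3 : ℝ) ^ (1 - (k : ℤ)) * len (mid K)),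
             (mid K).1 + ((j : ℝ) + 1) * ((3 : ℝ) ^ (1 - (k : ℤ)) * len (mid K)))}

/-- The families `𝐉ᵢ` (of interest for `i ≥ 1`). -/
def Jfam (k i : ℕ) : Set (ℝ × ℝ) := {J | ∃ K ∈ Kfam k (i - 1), J = mid K}

/-- The family `𝐊 = ⋃ᵢ 𝐊ᵢ`. -/
def KK (k : ℕ) : Set (ℝ × ℝ) := ⋃ i, Kfam k i

/-- The family `𝐉 = ⋃_{i ≥ 1} 𝐉ᵢ`. -/
def JJ (k : ℕ) : Set (ℝ × ℝ) := ⋃ i, Jfam k (i + 1)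

/-- The chosen triadic interval `I(J)` adjacent to `J` of length `3^{1-k}|J|`, encoded by a
choice function `ch` deciding, for each `J`, whether `I(J)` lies to the right (`true`) or to
the left (`false`) of `J`. -/
def IJ (k : ℕ) (ch : ℝ × ℝ → Bool) (J : ℝ × ℝ) : ℝ × ℝ :=
  if ch J then (J.2, J.2 + (3 : ℝ) ^ (1 - (k : ℤ)) * len J)
  else (J.1 - (3 : ℝ) ^ (1 - (k : ℤ)) * len J, J.1)

/-- The weight `w_k = Σ_{i ≥ 1} Σ_{J ∈ 𝐉ᵢ} (3^k/(3^{k-1}+1))^i · 1_{I(J)}`. -/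
def wgt (k : ℕ) (ch : ℝ × ℝ → Bool) (x : ℝ) : ℝ :=
  ∑' i : ℕ, ∑' J : ↥(Jfam k (i + 1)),
    Set.indicator (ivSet (IJ k ch (J : ℝ × ℝ)))
      (fun _ => ((3 : ℝ) ^ k / ((3 : ℝ) ^ (k - 1) + 1)) ^ (i + 1)) x

/-- The weight `σ_k = w_k^{1-p}` on `{w_k > 0}`, and `0` elsewhere. -/
def sgm (p : ℝ) (k : ℕ) (ch : ℝ × ℝ → Bool) (x : ℝ) : ℝ :=
  if 0 < wgt k ch x then wgt k ch x ^ (1 - p) else 0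

/-- `u(I) = ∫_I u`. -/
def mass (u : ℝ → ℝ) (I : ℝ × ℝ) : ℝ := ∫ x in ivSet I, u x

/-- `⟨u⟩_I = u(I)/|I|`. -/
def avg (u : ℝ → ℝ) (I : ℝ × ℝ) : ℝ := mass u I / len I

/-- `ch_𝐊(K)`: the members of `𝐊_{i+1}` contained in `K ∈ 𝐊ᵢ`. -/
def chK (k : ℕ) (K : ℝ × ℝ) : Set (ℝ × ℝ) :=
  {K' | ∃ i, K ∈ Kfam k i ∧ K' ∈ Kfam k (i + 1) ∧ ivSet K' ⊆ ivSet K}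

/-- Triadic intervals of `ℝ`. -/
def IsTriadic (I : ℝ × ℝ) : Prop :=
  ∃ n j : ℤ, I.1 = (j : ℝ) * (3 : ℝ) ^ (-n) ∧ I.2 = ((j : ℝ) + 1) * (3 : ℝ) ^ (-n)

/-- Maximal members of `S` strictly contained in `R`. -/
def maxIn (S : Set (ℝ × ℝ)) (R : ℝ × ℝ) : Set (ℝ × ℝ) :=
  {Q | Q ∈ S ∧ ivSet Q ⊂ ivSet R ∧
    ∀ Q' ∈ S, ivSet Q ⊆ ivSet Q' → ivSet Q' ⊂ ivSet R → ivSet Q' = ivSet Q}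

/-- Martingale `ε`-sparse families of (half-open) intervals. -/
def MSparse (ε : ℝ) (S : Set (ℝ × ℝ)) : Prop :=
  S.Countable ∧ (∀ I ∈ S, I.1 < I.2) ∧
    (∀ I ∈ S, ∀ J ∈ S, ivSet I ⊆ ivSet J ∨ ivSet J ⊆ ivSet I ∨ ivSet I ∩ ivSet J = ∅) ∧
    ∀ R ∈ S, (∑' Q : ↥(maxIn S R), len (Q : ℝ × ℝ)) ≤ ε * len R

/-- `Σ_{I ∈ F} ⟨u⟩_I^q · ⟨v⟩_I · |I|`. -/
def sumTest (q : ℝ) (u v : ℝ → ℝ) (F : Set (ℝ × ℝ)) : ℝ :=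
  ∑' I : ↥F, avg u (I : ℝ × ℝ) ^ q * avg v (I : ℝ × ℝ) * len (I : ℝ × ℝ)


/-! Structural lemmas -/

lemma len_mid (A : ℝ × ℝ) : len (mid A) = len A / 3 := by
  simp only [len, mid]; ring

lemma pow31 {k : ℕ} (hk : 1 ≤ k) : (3:ℝ) ^ (k - 1) * (3:ℝ) ^ (1 - (k:ℤ)) = 1 := by
  have h1 : ((3:ℝ) ^ (k - 1) : ℝ) = (3:ℝ) ^ ((k - 1 : ℕ) : ℤ) := by
    rw [zpow_natCast]
  rw [h1, ← zpow_add₀ (by norm_num : (3:ℝ) ≠ 0)]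
  have : ((k - 1 : ℕ) : ℤ) + (1 - (k:ℤ)) = 0 := by
    have : ((k - 1 : ℕ) : ℤ) = (k:ℤ) - 1 := by
      omega
    omega
  rw [this, zpow_zero]

lemma kfam_len {k n : ℕ} {K : ℝ × ℝ} (h : K ∈ Kfam k n) :
    len K = ((3 : ℝ) ^ (1 - (k : ℤ)) / 3) ^ n := by
  induction n generalizing K with
  | zero => simp only [Kfam, mem_singleton_iff] at h; subst h; simp [len]
  | succ n ih =>
    obtain ⟨A, hA, j, hj, rfl⟩ := h
    have h1 : len ((mid A).1 + (j : ℝ) * ((3 : ℝ) ^ (1 - (k : ℤ)) * len (mid A)),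
        (mid A).1 + ((j : ℝ) + 1) * ((3 : ℝ) ^ (1 - (k : ℤ)) * len (mid A)))
        = (3 : ℝ) ^ (1 - (k : ℤ)) * len (mid A) := by
      simp only [len]; ring
    rw [h1, len_mid, ih hA, pow_succ]
    ring

lemma kfam_len_pos {k n : ℕ} {K : ℝ × ℝ} (h : K ∈ Kfam k n) : 0 < len K := by
  rw [kfam_len h]
  positivity

lemma child_subset_mid {k n : ℕ} (hk : 1 ≤ k) {A : ℝ × ℝ} (hA : A ∈ Kfam k n) {j : ℕ}
    (hj : j < 3 ^ (k - 1)) :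
    ivSet ((mid A).1 + (j : ℝ) * ((3 : ℝ) ^ (1 - (k : ℤ)) * len (mid A)),
           (mid A).1 + ((j : ℝ) + 1) * ((3 : ℝ) ^ (1 - (k : ℤ)) * len (mid A))) ⊆
      ivSet (mid A) := by
  have hlm : 0 < len (mid A) := by rw [len_mid]; linarith [kfam_len_pos hA]
  set d : ℝ := (3 : ℝ) ^ (1 - (k : ℤ)) * len (mid A) with hd_def
  have hd : 0 < d := by positivity
  have hj' : ((j : ℝ) + 1) * d ≤ len (mid A) := by
    have h3 : ((j : ℝ) + 1) ≤ (3:ℝ) ^ (k - 1) := by exact_mod_cast Nat.succ_le_of_lt hj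
    calc ((j : ℝ) + 1) * d ≤ (3:ℝ) ^ (k - 1) * d := by nlinarith
    _ = len (mid A) := by rw [hd_def, ← mul_assoc, pow31 hk, one_mul]
  intro x hx
  simp only [ivSet, mem_Ico] at hx ⊢
  have hm2 : (mid A).2 = (mid A).1 + len (mid A) := by simp [len]
  constructor
  · nlinarith [hx.1, (by positivity : (0:ℝ) ≤ (j:ℝ) * d)]
  · calc x < (mid A).1 + ((j : ℝ) + 1) * d := hx.2
      _ ≤ (mid A).1 + len (mid A) := by linarith
      _ = (mid A).2 := hm2.symm

lemma kfam_succ_subset_mid {k n : ℕ} (hk : 1 ≤ k) {K' : ℝ × ℝ} (h : K' ∈ Kfam k (n + 1)) :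
    ∃ A ∈ Kfam k n, ivSet K' ⊆ ivSet (mid A) := by
  obtain ⟨A, hA, j, hj, rfl⟩ := h
  exact ⟨A, hA, child_subset_mid hk hA hj⟩

lemma mid_subset {A : ℝ × ℝ} (h : 0 ≤ len A) : ivSet (mid A) ⊆ ivSet A := by
  intro x hx
  simp only [ivSet, mid, len, mem_Ico] at hx ⊢
  constructor <;> nlinarith [hx.1, hx.2]

lemma kfam_ancestor {k : ℕ} (hk : 1 ≤ k) {n m : ℕ} {K' : ℝ × ℝ}
    (h : K' ∈ Kfam k (n + 1 + m)) : ∃ A ∈ Kfam k n, ivSet K' ⊆ ivSet (mid A) := by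
  induction m generalizing K' with
  | zero => exact kfam_succ_subset_mid hk h
  | succ m ih =>
    obtain ⟨P, hP, hsub⟩ := kfam_succ_subset_mid hk (show K' ∈ Kfam k ((n + 1 + m) + 1) from h)
    obtain ⟨A, hA, hsub2⟩ := ih hP
    exact ⟨A, hA, fun x hx => hsub2 (mid_subset (le_of_lt (kfam_len_pos hP)) (hsub hx))⟩

lemma kfam_disjoint {k : ℕ} (hk : 1 ≤ k) {n : ℕ} {K1 K2 : ℝ × ℝ}
    (h1 : K1 ∈ Kfam k n) (h2 : K2 ∈ Kfam k n) (hne : K1 ≠ K2) :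
    ivSet K1 ∩ ivSet K2 = ∅ := by
  induction n generalizing K1 K2 with
  | zero =>
    simp only [Kfam, mem_singleton_iff] at h1 h2
    exact absurd (h1.trans h2.symm) hne
  | succ n ih =>
    obtain ⟨A1, hA1, j1, hj1, rfl⟩ := h1
    obtain ⟨A2, hA2, j2, hj2, rfl⟩ := h2
    by_cases hA : A1 = A2
    · subst hA
      have hj : j1 ≠ j2 := by rintro rfl; exact hne rfl
      have hlm : 0 < len (mid A1) := by rw [len_mid]; linarith [kfam_len_pos hA1]
      set d : ℝ := (3 : ℝ) ^ (1 - (k : ℤ)) * len (mid A1) with hd_def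
      have hd : 0 < d := by positivity
      apply Set.eq_empty_of_forall_notMem
      rintro x ⟨hx1, hx2⟩
      simp only [ivSet, mem_Ico] at hx1 hx2
      rcases Nat.lt_or_ge j1 j2 with h | h
      · have : (j1:ℝ) + 1 ≤ (j2:ℝ) := by exact_mod_cast h
        nlinarith [hx1.2, hx2.1]
      · have : j2 < j1 := by omega
        have : (j2:ℝ) + 1 ≤ (j1:ℝ) := by exact_mod_cast this
        nlinarith [hx2.2, hx1.1]
    · have hdisj := ih hA1 hA2 hA
      apply Set.eq_empty_of_forall_notMem
      rintro x ⟨hx1, hx2⟩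
      have m1 : x ∈ ivSet A1 :=
        mid_subset (le_of_lt (kfam_len_pos hA1)) (child_subset_mid hk hA1 hj1 hx1)
      have m2 : x ∈ ivSet A2 :=
        mid_subset (le_of_lt (kfam_len_pos hA2)) (child_subset_mid hk hA2 hj2 hx2)
      exact absurd (Set.mem_inter m1 m2) (by rw [hdisj]; exact notMem_empty x)

/-- The "core" of an interval: middle part at distance `len/4` from endpoints. -/
def core (A : ℝ × ℝ) : Set ℝ := Set.Ico (A.1 + len A / 4) (A.2 - len A / 4)

lemma pow_small {k : ℕ} (hk : 3 ≤ k) : (3:ℝ) ^ (1 - (k:ℤ)) ≤ 1 / 9 := by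
  have h1 : (1 - (k:ℤ)) ≤ -2 := by omega
  have := zpow_le_zpow_right₀ (by norm_num : (1:ℝ) ≤ 3) h1
  have h2 : (3:ℝ) ^ (-2 : ℤ) = 1 / 9 := by norm_num
  linarith [this, h2 ▸ this]

lemma pow_pos' (k : ℕ) : (0:ℝ) < (3:ℝ) ^ (1 - (k:ℤ)) := by positivity

lemma IJ_subset_core {k : ℕ} (hk : 3 ≤ k) (ch : ℝ × ℝ → Bool) {A : ℝ × ℝ} (hA : 0 < len A) :
    ivSet (IJ k ch (mid A)) ⊆ core A := by
  have hp := pow_small hk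
  have hp0 := pow_pos' k
  have hm1 : (mid A).1 = A.1 + len A / 3 := by simp only [mid, len]
  have hm2 : (mid A).2 = A.2 - len A / 3 := by simp only [mid, len]
  have hlm : len (mid A) = len A / 3 := len_mid A
  have hlen : len A = A.2 - A.1 := rfl
  intro x hx
  simp only [IJ] at hx
  by_cases hch : ch (mid A) = true
  · rw [if_pos hch] at hx
    simp only [ivSet, mem_Ico] at hx
    simp only [core, mem_Ico]
    constructor
    · have : A.1 + len A / 4 ≤ (mid A).2 := by rw [hm2]; nlinarith
      linarith [hx.1]
    · have : (mid A).2 + (3:ℝ) ^ (1 - (k:ℤ)) * len (mid A) ≤ A.2 - len A / 4 := by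
        rw [hm2, hlm]
        nlinarith
      linarith [hx.2]
  · rw [if_neg hch] at hx
    simp only [ivSet, mem_Ico] at hx
    simp only [core, mem_Ico]
    constructor
    · have : A.1 + len A / 4 ≤ (mid A).1 - (3:ℝ) ^ (1 - (k:ℤ)) * len (mid A) := by
        rw [hm1, hlm]
        nlinarith
      linarith [hx.1]
    · have : (mid A).1 ≤ A.2 - len A / 4 := by rw [hm1]; nlinarith
      linarith [hx.2]

lemma mid_subset_core {A : ℝ × ℝ} (hA : 0 < len A) : ivSet (mid A) ⊆ core A := by
  intro x hx
  have hm1 : (mid A).1 = A.1 + len A / 3 := by simp only [mid, len]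
  have hm2 : (mid A).2 = A.2 - len A / 3 := by simp only [mid, len]
  simp only [ivSet, mem_Ico] at hx
  simp only [core, mem_Ico]
  constructor
  · rw [hm1] at hx; linarith [hx.1]
  · rw [hm2] at hx; linarith [hx.2]

lemma core_subset (A : ℝ × ℝ) (hA : 0 ≤ len A) : core A ⊆ ivSet A := by
  intro x hx
  simp only [core, mem_Ico] at hx
  simp only [ivSet, mem_Ico]
  constructor <;> [linarith [hx.1]; linarith [hx.2]]

lemma IJ_disjoint_mid {k : ℕ} (ch : ℝ × ℝ → Bool) (A : ℝ × ℝ) :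
    ivSet (IJ k ch (mid A)) ∩ ivSet (mid A) = ∅ := by
  apply Set.eq_empty_of_forall_notMem
  rintro x ⟨hx1, hx2⟩
  simp only [ivSet, mem_Ico] at hx2
  simp only [IJ] at hx1
  by_cases hch : ch (mid A) = true
  · rw [if_pos hch] at hx1
    simp only [ivSet, mem_Ico] at hx1
    linarith [hx1.1, hx2.2]
  · rw [if_neg hch] at hx1
    simp only [ivSet, mem_Ico] at hx1
    linarith [hx1.2, hx2.1]

lemma jfam_mem {k i : ℕ} {J : ℝ × ℝ} (h : J ∈ Jfam k (i + 1)) :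
    ∃ A ∈ Kfam k i, J = mid A := by
  simpa [Jfam] using h

lemma IJ_inter_kfam {k : ℕ} (hk : 3 ≤ k) (ch : ℝ × ℝ → Bool) {i n : ℕ} {J K : ℝ × ℝ}
    (hJ : J ∈ Jfam k (i + 1)) (hK : K ∈ Kfam k n) :
    ivSet (IJ k ch J) ∩ ivSet K ⊆ core K := by
  have hk1 : 1 ≤ k := by omega
  obtain ⟨A, hA, rfl⟩ := jfam_mem hJ
  have hlA : 0 < len A := kfam_len_pos hA
  have hlK : 0 < len K := kfam_len_pos hK
  rintro x ⟨hx1, hx2⟩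
  rcases lt_trichotomy i n with hlt | heq | hgt
  · -- i < n : K is deep inside; x ∈ K ⊆ mid E for E ∈ Kfam k i
    obtain ⟨E, hE, hKE⟩ := kfam_ancestor hk1 (show K ∈ Kfam k (i + 1 + (n - i - 1)) from by
      have : i + 1 + (n - i - 1) = n := by omega
      rw [this]; exact hK)
    by_cases hEA : E = A
    · subst hEA
      exact absurd (Set.mem_inter hx1 (hKE hx2))
        (by rw [IJ_disjoint_mid ch E]; exact notMem_empty x)
    · have hxA : x ∈ ivSet A := core_subset A hlA.le (IJ_subset_core hk ch hlA hx1)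
      have hxE : x ∈ ivSet E := mid_subset (kfam_len_pos hE).le (hKE hx2)
      exact absurd (Set.mem_inter hxE hxA)
        (by rw [kfam_disjoint hk1 hE hA hEA]; exact notMem_empty x)
  · -- i = n
    subst heq
    by_cases hAK : A = K
    · subst hAK; exact IJ_subset_core hk ch hlA hx1
    · have hxA : x ∈ ivSet A := core_subset A hlA.le (IJ_subset_core hk ch hlA hx1)
      exact absurd (Set.mem_inter hxA hx2)
        (by rw [kfam_disjoint hk1 hA hK hAK]; exact notMem_empty x)
  · -- i > n : A is deep inside; A ⊆ mid B for B ∈ Kfam k n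
    obtain ⟨B, hB, hAB⟩ := kfam_ancestor hk1 (show A ∈ Kfam k (n + 1 + (i - n - 1)) from by
      have : n + 1 + (i - n - 1) = i := by omega
      rw [this]; exact hA)
    have hxA : x ∈ ivSet A := core_subset A hlA.le (IJ_subset_core hk ch hlA hx1)
    by_cases hBK : B = K
    · subst hBK
      exact mid_subset_core hlK (hAB hxA)
    · have hxB : x ∈ ivSet B := mid_subset (kfam_len_pos hB).le (hAB hxA)
      exact absurd (Set.mem_inter hxB hx2)
        (by rw [kfam_disjoint hk1 hB hK hBK]; exact notMem_empty x)

lemma wgt_vanish {k : ℕ} (hk : 3 ≤ k) (ch : ℝ × ℝ → Bool) {n : ℕ} {K : ℝ × ℝ}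
    (hK : K ∈ Kfam k n) {x : ℝ} (hx : x ∈ ivSet K)
    (hside : x < K.1 + len K / 4 ∨ K.2 - len K / 4 ≤ x) : wgt k ch x = 0 := by
  have hnot : ∀ (i : ℕ) (J : ℝ × ℝ), J ∈ Jfam k (i + 1) → x ∉ ivSet (IJ k ch J) := by
    intro i J hJ hmem
    have hcore : x ∈ core K := IJ_inter_kfam hk ch hJ hK (Set.mem_inter hmem hx)
    simp only [core, mem_Ico] at hcore
    rcases hside with h | h <;> linarith [hcore.1, hcore.2]
  unfold wgt
  have h0 : ∀ i : ℕ, (∑' J : ↥(Jfam k (i + 1)),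
      Set.indicator (ivSet (IJ k ch (J : ℝ × ℝ)))
        (fun _ => ((3 : ℝ) ^ k / ((3 : ℝ) ^ (k - 1) + 1)) ^ (i + 1)) x) = 0 := by
    intro i
    have : ∀ J : ↥(Jfam k (i + 1)),
        Set.indicator (ivSet (IJ k ch (J : ℝ × ℝ)))
          (fun _ => ((3 : ℝ) ^ k / ((3 : ℝ) ^ (k - 1) + 1)) ^ (i + 1)) x = 0 :=
      fun J => Set.indicator_of_notMem (hnot i J J.2) _
    rw [tsum_congr this, tsum_zero]
  rw [tsum_congr h0, tsum_zero]

/-! Finiteness -/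

lemma kfam_cover (k n : ℕ) : ∃ s : Finset (ℝ × ℝ), Kfam k n ⊆ ↑s ∧ s.card ≤ (3 ^ (k-1)) ^ n := by
  induction n with
  | zero => exact ⟨{((0:ℝ),(1:ℝ))}, by simp [Kfam], by simp⟩
  | succ n ih =>
    obtain ⟨s, hs, hc⟩ := ih
    refine ⟨(s ×ˢ Finset.range (3 ^ (k-1))).image (fun q : (ℝ × ℝ) × ℕ =>
      ((mid q.1).1 + (q.2 : ℝ) * ((3:ℝ) ^ (1 - (k:ℤ)) * len (mid q.1)),
       (mid q.1).1 + ((q.2 : ℝ) + 1) * ((3:ℝ) ^ (1 - (k:ℤ)) * len (mid q.1)))), ?_, ?_⟩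
    · rintro I ⟨A, hA, j, hj, rfl⟩
      exact Finset.mem_coe.2 (Finset.mem_image.2 ⟨(A, j),
        Finset.mem_product.2 ⟨hs hA, Finset.mem_range.2 hj⟩, rfl⟩)
    · calc ((s ×ˢ Finset.range (3 ^ (k-1))).image _).card
          ≤ (s ×ˢ Finset.range (3 ^ (k-1))).card := Finset.card_image_le
        _ = s.card * 3 ^ (k-1) := by rw [Finset.card_product, Finset.card_range]
        _ ≤ (3 ^ (k-1)) ^ n * 3 ^ (k-1) := Nat.mul_le_mul_right _ hc
        _ = (3 ^ (k-1)) ^ (n+1) := (pow_succ _ _).symm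

lemma jfam_cover (k i : ℕ) : ∃ t : Finset (ℝ × ℝ),
    Jfam k (i+1) ⊆ ↑t ∧ t.card ≤ (3 ^ (k-1)) ^ i := by
  obtain ⟨s, hs, hc⟩ := kfam_cover k i
  refine ⟨s.image mid, ?_, le_trans Finset.card_image_le hc⟩
  intro J hJ
  obtain ⟨A, hA, rfl⟩ := jfam_mem hJ
  exact Finset.mem_coe.2 (Finset.mem_image.2 ⟨A, hs hA, rfl⟩)

lemma jfam_finite (k i : ℕ) : (Jfam k (i+1)).Finite := by
  obtain ⟨t, ht, -⟩ := jfam_cover k i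
  exact Set.Finite.subset t.finite_toSet ht

/-! The level functions -/

def Creal (k : ℕ) : ℝ := (3:ℝ) ^ k / ((3:ℝ) ^ (k-1) + 1)

def gfun (k : ℕ) (ch : ℝ × ℝ → Bool) (i : ℕ) (x : ℝ) : ℝ :=
  ∑' J : ↥(Jfam k (i + 1)),
    Set.indicator (ivSet (IJ k ch (J : ℝ × ℝ))) (fun _ => Creal k ^ (i + 1)) x

lemma wgt_eq (k : ℕ) (ch : ℝ × ℝ → Bool) (x : ℝ) :
    wgt k ch x = ∑' i : ℕ, gfun k ch i x := rfl

lemma Creal_pos (k : ℕ) : 0 < Creal k := by unfold Creal; positivity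

lemma Creal_one_le {k : ℕ} (hk : 1 ≤ k) : 1 ≤ Creal k := by
  unfold Creal
  rw [le_div_iff₀ (by positivity)]
  have h3 : (3:ℝ) ^ k = 3 ^ (k-1) * 3 := by
    rw [← pow_succ]; congr 1; omega
  have h1 : (1:ℝ) ≤ 3 ^ (k-1) := one_le_pow₀ (by norm_num)
  nlinarith

lemma Creal_lt_three {k : ℕ} (hk : 1 ≤ k) : Creal k < 3 := by
  unfold Creal
  rw [div_lt_iff₀ (by positivity)]
  have h3 : (3:ℝ) ^ k = 3 ^ (k-1) * 3 := by
    rw [← pow_succ]; congr 1; omega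
  have h1 : (1:ℝ) ≤ 3 ^ (k-1) := one_le_pow₀ (by norm_num)
  nlinarith

lemma gfun_nonneg (k : ℕ) (ch : ℝ × ℝ → Bool) (i : ℕ) (x : ℝ) : 0 ≤ gfun k ch i x :=
  tsum_nonneg fun J => Set.indicator_nonneg (fun _ _ => le_of_lt (pow_pos (Creal_pos k) _)) x

lemma wgt_nonneg (k : ℕ) (ch : ℝ × ℝ → Bool) (x : ℝ) : 0 ≤ wgt k ch x := by
  rw [wgt_eq]; exact tsum_nonneg fun i => gfun_nonneg k ch i x

lemma gfun_meas (k : ℕ) (ch : ℝ × ℝ → Bool) (i : ℕ) : Measurable (gfun k ch i) := by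
  classical
  haveI := (jfam_finite k i).fintype
  have heq : gfun k ch i = fun x => ∑ J : ↥(Jfam k (i + 1)),
      Set.indicator (ivSet (IJ k ch (J : ℝ × ℝ))) (fun _ => Creal k ^ (i + 1)) x := by
    funext x; exact tsum_fintype _
  rw [heq]
  exact Finset.measurable_sum _ fun J _ =>
    measurable_const.indicator (show MeasurableSet (Set.Ico _ _) from measurableSet_Ico)

lemma indicator_integrable (k : ℕ) (ch : ℝ × ℝ → Bool) (c : ℝ) (J : ℝ × ℝ) :
    Integrable (Set.indicator (ivSet (IJ k ch J)) (fun _ => c)) := by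
  unfold ivSet
  rw [integrable_indicator_iff (show MeasurableSet (Set.Ico _ _) from measurableSet_Ico)]
  refine (integrableOn_const_iff (by simp)).2 (Or.inr ?_)
  show volume (Set.Ico _ _) < ⊤
  rw [Real.volume_Ico]
  exact ENNReal.ofReal_lt_top

lemma gfun_integrable (k : ℕ) (ch : ℝ × ℝ → Bool) (i : ℕ) : Integrable (gfun k ch i) := by
  classical
  haveI := (jfam_finite k i).fintype
  have heq : gfun k ch i = fun x => ∑ J : ↥(Jfam k (i + 1)),
      Set.indicator (ivSet (IJ k ch (J : ℝ × ℝ))) (fun _ => Creal k ^ (i + 1)) x := by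
    funext x; exact tsum_fintype _
  rw [heq]
  exact integrable_finset_sum _ fun J _ => indicator_integrable k ch _ _

lemma len_IJ (k : ℕ) (ch : ℝ × ℝ → Bool) (J : ℝ × ℝ) :
    len (IJ k ch J) = (3:ℝ) ^ (1 - (k:ℤ)) * len J := by
  unfold IJ len
  by_cases h : ch J = true
  · rw [if_pos h]; ring
  · rw [if_neg h]; ring

def bnd (k i : ℕ) : ℝ := (Creal k * ((3:ℝ) ^ (1 - (k:ℤ)) / 3)) * (Creal k / 3) ^ i

lemma integral_indicator_IJ (k : ℕ) (ch : ℝ × ℝ → Bool) (c : ℝ) (hc : 0 ≤ c) (J : ℝ × ℝ)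
    (hJ : 0 ≤ len J) :
    ∫ x, Set.indicator (ivSet (IJ k ch J)) (fun _ => c) x = ((3:ℝ) ^ (1 - (k:ℤ)) * len J) * c := by
  unfold ivSet
  rw [integral_indicator_const c (show MeasurableSet (Set.Ico _ _) from measurableSet_Ico)]
  show ((volume (Set.Ico (IJ k ch J).1 (IJ k ch J).2)).toReal) • c = _
  rw [Real.volume_Ico]
  have h2 : (IJ k ch J).2 - (IJ k ch J).1 = (3:ℝ) ^ (1 - (k:ℤ)) * len J := len_IJ k ch J
  rw [h2, ENNReal.toReal_ofReal (by positivity), smul_eq_mul]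

lemma gfun_integral_le {k : ℕ} (hk : 1 ≤ k) (ch : ℝ × ℝ → Bool) (i : ℕ) :
    ∫ x, gfun k ch i x ≤ bnd k i := by
  classical
  haveI := (jfam_finite k i).fintype
  obtain ⟨t, ht, hcard⟩ := jfam_cover k i
  have heq : gfun k ch i = fun x => ∑ J : ↥(Jfam k (i + 1)),
      Set.indicator (ivSet (IJ k ch (J : ℝ × ℝ))) (fun _ => Creal k ^ (i + 1)) x := by
    funext x; exact tsum_fintype _
  rw [heq, integral_finset_sum _ fun J _ => indicator_integrable k ch _ _]
  -- each term equals t_i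
  set q : ℝ := (3:ℝ) ^ (1 - (k:ℤ)) / 3 with hq
  have hq0 : 0 ≤ q := by rw [hq]; positivity
  have hterm : ∀ J : ↥(Jfam k (i + 1)),
      (∫ x, Set.indicator (ivSet (IJ k ch (J : ℝ × ℝ))) (fun _ => Creal k ^ (i + 1)) x)
        = ((3:ℝ) ^ (1 - (k:ℤ)) * (q ^ i / 3)) * Creal k ^ (i + 1) := by
    rintro ⟨J, hJ⟩
    obtain ⟨A, hA, rfl⟩ := jfam_mem hJ
    have hlen : len (mid A) = q ^ i / 3 := by
      rw [len_mid, kfam_len hA]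
    rw [integral_indicator_IJ k ch _ (le_of_lt (pow_pos (Creal_pos k) _)) _
      (by rw [hlen]; exact div_nonneg (pow_nonneg hq0 i) (by norm_num)), hlen]
  rw [Finset.sum_congr rfl (fun J _ => hterm J)]
  rw [Finset.sum_const]
  have hcard2 : Fintype.card ↥(Jfam k (i + 1)) ≤ (3 ^ (k-1)) ^ i := by
    rw [← Set.toFinset_card]
    exact le_trans (Finset.card_le_card (Set.toFinset_subset.2 ht)) hcard
  have hcards : Finset.univ.card = Fintype.card ↥(Jfam k (i + 1)) := rfl
  rw [hcards, nsmul_eq_mul]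
  have htpos : (0:ℝ) ≤ ((3:ℝ) ^ (1 - (k:ℤ)) * (q ^ i / 3)) * Creal k ^ (i + 1) := by
    have h1 := Creal_pos k
    have h2 : (0:ℝ) ≤ (3:ℝ) ^ (1 - (k:ℤ)) := le_of_lt (pow_pos' k)
    exact mul_nonneg (mul_nonneg h2 (div_nonneg (pow_nonneg hq0 i) (by norm_num)))
      (le_of_lt (pow_pos h1 _))
  have hstep : (Fintype.card ↥(Jfam k (i + 1)) : ℝ) ≤ ((3:ℝ) ^ (k-1)) ^ i := by
    calc (Fintype.card ↥(Jfam k (i + 1)) : ℝ) ≤ (((3 ^ (k-1)) ^ i : ℕ) : ℝ) := by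
          exact_mod_cast hcard2
      _ = ((3:ℝ) ^ (k-1)) ^ i := by push_cast; ring
  calc (Fintype.card ↥(Jfam k (i + 1)) : ℝ) * (((3:ℝ) ^ (1 - (k:ℤ)) * (q ^ i / 3)) * Creal k ^ (i + 1))
      ≤ ((3:ℝ) ^ (k-1)) ^ i * (((3:ℝ) ^ (1 - (k:ℤ)) * (q ^ i / 3)) * Creal k ^ (i + 1)) := by
        exact mul_le_mul_of_nonneg_right hstep htpos
    _ = bnd k i := by
        unfold bnd
        have h13 : ((3:ℝ) ^ (k-1) * q) = 1/3 := by
          rw [hq, ← mul_div_assoc, pow31 hk]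
        calc ((3:ℝ) ^ (k-1)) ^ i * (((3:ℝ) ^ (1 - (k:ℤ)) * (q ^ i / 3)) * Creal k ^ (i + 1))
            = ((3:ℝ) ^ (1 - (k:ℤ)) * Creal k / 3) * (((3:ℝ) ^ (k-1) * q) * Creal k) ^ i := by
              rw [mul_pow, pow_succ]; ring
          _ = ((3:ℝ) ^ (1 - (k:ℤ)) * Creal k / 3) * (Creal k / 3) ^ i := by
              rw [h13]; ring_nf
          _ = (Creal k * ((3:ℝ) ^ (1 - (k:ℤ)) / 3)) * (Creal k / 3) ^ i := by ring

lemma bnd_summable {k : ℕ} (hk : 1 ≤ k) : Summable (bnd k) := by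
  unfold bnd
  apply Summable.mul_left
  apply summable_geometric_of_lt_one (div_nonneg (Creal_pos k).le (by norm_num))
  have := Creal_lt_three hk
  linarith

/-! Measurability and integrability of `wgt` -/

lemma tsum_eq_toReal_tsum_ofReal {g : ℕ → ℝ} (hg : ∀ i, 0 ≤ g i) :
    ∑' i, g i = (∑' i, ENNReal.ofReal (g i)).toReal := by
  by_cases h : Summable g
  · rw [← ENNReal.ofReal_tsum_of_nonneg hg h, ENNReal.toReal_ofReal (tsum_nonneg hg)]
  · rw [tsum_eq_zero_of_not_summable h]
    have htop : (∑' i, ENNReal.ofReal (g i)) = ⊤ := by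
      by_contra h'
      have := ENNReal.summable_toReal h'
      have heq : (fun i => (ENNReal.ofReal (g i)).toReal) = g := by
        funext i; exact ENNReal.toReal_ofReal (hg i)
      rw [heq] at this
      exact h this
    rw [htop, ENNReal.toReal_top]

lemma wgt_eq_toReal (k : ℕ) (ch : ℝ × ℝ → Bool) (x : ℝ) :
    wgt k ch x = (∑' i, ENNReal.ofReal (gfun k ch i x)).toReal := by
  rw [wgt_eq]
  exact tsum_eq_toReal_tsum_ofReal fun i => gfun_nonneg k ch i x

lemma wgt_meas (k : ℕ) (ch : ℝ × ℝ → Bool) : Measurable (wgt k ch) := by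
  have heq : wgt k ch = fun x => (∑' i, ENNReal.ofReal (gfun k ch i x)).toReal := by
    funext x; exact wgt_eq_toReal k ch x
  rw [heq]
  exact ENNReal.measurable_toReal.comp
    (Measurable.ennreal_tsum fun i => ENNReal.measurable_ofReal.comp (gfun_meas k ch i))

lemma wgt_integrable {k : ℕ} (hk : 1 ≤ k) (ch : ℝ × ℝ → Bool) : Integrable (wgt k ch) := by
  refine ⟨(wgt_meas k ch).aestronglyMeasurable, ?_⟩
  rw [hasFiniteIntegral_iff_norm]
  have hb : ∀ x : ℝ, ENNReal.ofReal ‖wgt k ch x‖ ≤ ∑' i, ENNReal.ofReal (gfun k ch i x) := by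
    intro x
    rw [Real.norm_of_nonneg (wgt_nonneg k ch x), wgt_eq_toReal k ch x]
    exact ENNReal.ofReal_toReal_le
  calc ∫⁻ x, ENNReal.ofReal ‖wgt k ch x‖
      ≤ ∫⁻ x, ∑' i, ENNReal.ofReal (gfun k ch i x) := lintegral_mono hb
    _ = ∑' i, ∫⁻ x, ENNReal.ofReal (gfun k ch i x) :=
        lintegral_tsum fun i => (ENNReal.measurable_ofReal.comp (gfun_meas k ch i)).aemeasurable
    _ ≤ ∑' i, ENNReal.ofReal (bnd k i) := by
        apply ENNReal.tsum_le_tsum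
        intro i
        rw [← ofReal_integral_eq_lintegral_ofReal (gfun_integrable k ch i)
          (Eventually.of_forall (gfun_nonneg k ch i))]
        exact ENNReal.ofReal_le_ofReal (gfun_integral_le hk ch i)
    _ = ENNReal.ofReal (∑' i, bnd k i) := by
        rw [ENNReal.ofReal_tsum_of_nonneg (fun i => ?_) (bnd_summable hk)]
        unfold bnd
        exact mul_nonneg (mul_nonneg (Creal_pos k).le (by positivity))
          (pow_nonneg (div_nonneg (Creal_pos k).le (by norm_num)) i)
    _ < ⊤ := ENNReal.ofReal_lt_top

/-! Properties of `sgm` -/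

lemma wgt_ge_one_of_pos {k : ℕ} (hk : 1 ≤ k) (ch : ℝ × ℝ → Bool) {x : ℝ}
    (h : 0 < wgt k ch x) : 1 ≤ wgt k ch x := by
  rw [wgt_eq] at h ⊢
  by_cases hs : Summable (fun i => gfun k ch i x)
  · have hex : ∃ i, 0 < gfun k ch i x := by
      by_contra hno
      push_neg at hno
      have hall : ∀ i, gfun k ch i x = 0 :=
        fun i => le_antisymm (hno i) (gfun_nonneg k ch i x)
      rw [tsum_congr hall, tsum_zero] at h
      exact lt_irrefl _ h
    obtain ⟨i, hi⟩ := hex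
    have hgi : Creal k ^ (i + 1) ≤ gfun k ch i x := by
      classical
      haveI := (jfam_finite k i).fintype
      unfold gfun at hi ⊢
      rw [tsum_fintype] at hi ⊢
      have hexJ : ∃ J : ↥(Jfam k (i + 1)),
          0 < Set.indicator (ivSet (IJ k ch (J : ℝ × ℝ))) (fun _ => Creal k ^ (i + 1)) x := by
        by_contra hno
        push_neg at hno
        have hall : ∀ J : ↥(Jfam k (i + 1)),
            Set.indicator (ivSet (IJ k ch (J : ℝ × ℝ))) (fun _ => Creal k ^ (i + 1)) x = 0 :=
          fun J => le_antisymm (hno J)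
            (Set.indicator_nonneg (fun _ _ => le_of_lt (pow_pos (Creal_pos k) _)) x)
        rw [Finset.sum_congr rfl (fun J _ => hall J)] at hi
        simp at hi
      obtain ⟨J, hJ⟩ := hexJ
      have hxmem : x ∈ ivSet (IJ k ch (J : ℝ × ℝ)) := by
        by_contra hxm
        rw [Set.indicator_of_notMem hxm] at hJ
        exact lt_irrefl _ hJ
      have hval : Set.indicator (ivSet (IJ k ch (J : ℝ × ℝ))) (fun _ => Creal k ^ (i + 1)) x
          = Creal k ^ (i + 1) := Set.indicator_of_mem hxmem _
      calc Creal k ^ (i + 1)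
          = Set.indicator (ivSet (IJ k ch (J : ℝ × ℝ))) (fun _ => Creal k ^ (i + 1)) x :=
            hval.symm
        _ ≤ _ := Finset.single_le_sum (f := fun J : ↥(Jfam k (i + 1)) =>
            Set.indicator (ivSet (IJ k ch (J : ℝ × ℝ))) (fun _ => Creal k ^ (i + 1)) x)
            (fun J _ => Set.indicator_nonneg
              (fun _ _ => le_of_lt (pow_pos (Creal_pos k) _)) x) (Finset.mem_univ J)
    have h1 : (1:ℝ) ≤ Creal k ^ (i + 1) := one_le_pow₀ (Creal_one_le hk)
    calc (1:ℝ) ≤ Creal k ^ (i + 1) := h1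
      _ ≤ gfun k ch i x := hgi
      _ ≤ ∑' i, gfun k ch i x := Summable.le_tsum hs i fun j _ => gfun_nonneg k ch j x
  · rw [tsum_eq_zero_of_not_summable hs] at h
    exact absurd h (lt_irrefl 0)

lemma sgm_nonneg (p : ℝ) (k : ℕ) (ch : ℝ × ℝ → Bool) (x : ℝ) : 0 ≤ sgm p k ch x := by
  unfold sgm
  split
  · exact Real.rpow_nonneg (le_of_lt (by assumption)) _
  · exact le_refl 0

lemma sgm_le_one {p : ℝ} (hp : 1 < p) {k : ℕ} (hk : 1 ≤ k) (ch : ℝ × ℝ → Bool) (x : ℝ) :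
    sgm p k ch x ≤ 1 := by
  unfold sgm
  split
  · exact Real.rpow_le_one_of_one_le_of_nonpos
      (wgt_ge_one_of_pos hk ch (by assumption)) (by linarith)
  · norm_num

lemma sgm_meas (p : ℝ) (k : ℕ) (ch : ℝ × ℝ → Bool) : Measurable (sgm p k ch) := by
  unfold sgm
  refine Measurable.ite ?_ ?_ measurable_const
  · exact measurableSet_lt measurable_const (wgt_meas k ch)
  · exact (wgt_meas k ch).pow_const _

/-! The averaging comparison -/

lemma avg_le_four {k n : ℕ} {K : ℝ × ℝ} (hK : K ∈ Kfam k n) (u : ℝ → ℝ)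
    (hu0 : ∀ x, 0 ≤ u x) (hint : IntegrableOn u (ivSet K))
    (hvan : ∀ x ∈ ivSet K, (x < K.1 + len K / 4 ∨ K.2 - len K / 4 ≤ x) → u x = 0)
    {L L' : ℝ × ℝ} (hL : L.1 < L.2) (hLK : ivSet L ⊆ ivSet K)
    (hL' : L'.1 < L'.2) (hL'L : ivSet L' ⊆ ivSet L) (hL'e : L'.1 = K.1 ∨ L'.2 = K.2) :
    avg u L' ≤ 4 * avg u L := by
  have hKp : 0 < len K := kfam_len_pos hK
  have hLsub := (Set.Ico_subset_Ico_iff hL).1 hLK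
  have hL'sub := (Set.Ico_subset_Ico_iff hL').1 hL'L
  have hL'K : ivSet L' ⊆ ivSet K := fun x hx => hLK (hL'L hx)
  have hLp : 0 < len L := by simp only [len]; linarith
  have hL'p : 0 < len L' := by simp only [len]; linarith
  have hlenLK : len L ≤ len K := by simp only [len]; rcases hLsub with ⟨h1, h2⟩; linarith
  have hmassL : 0 ≤ mass u L :=
    setIntegral_nonneg (show MeasurableSet (Set.Ico _ _) from measurableSet_Ico)
      fun x _ => hu0 x
  by_cases hsm : len L' < len K / 4
  · -- small case : u vanishes on L'
    have hz : Set.EqOn u 0 (ivSet L') := by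
      intro x hx
      have hxK := hL'K hx
      simp only [ivSet, mem_Ico] at hx
      apply hvan x hxK
      rcases hL'e with h1 | h2
      · left
        have : L'.2 = L'.1 + len L' := by simp only [len]; ring
        calc x < L'.2 := hx.2
          _ = K.1 + len L' := by rw [this, h1]
          _ < K.1 + len K / 4 := by linarith
      · right
        have : L'.1 = L'.2 - len L' := by simp only [len]; ring
        have hlt : K.2 - len K / 4 < L'.1 := by
          rw [show L'.1 = L'.2 - len L' from by simp only [len]; ring, h2]
          linarith
        linarith [hx.1]
    have hm0 : mass u L' = 0 := by
      unfold mass ivSet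
      rw [setIntegral_congr_fun measurableSet_Ico hz]
      simp
    unfold avg
    rw [hm0, zero_div]
    have : 0 ≤ mass u L / len L := div_nonneg hmassL hLp.le
    linarith
  · -- large case
    push_neg at hsm
    have hmono : mass u L' ≤ mass u L := by
      unfold mass
      exact setIntegral_mono_set (hint.mono_set hLK)
        (Filter.Eventually.of_forall hu0) (HasSubset.Subset.eventuallyLE hL'L)
    have h4 : len L ≤ 4 * len L' := by linarith
    unfold avg
    have step1 : mass u L' / len L' ≤ mass u L / len L' := by gcongr
    have heq4 : 4 * (mass u L / len L) = (4 * mass u L) / len L := by ring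
    have step2 : mass u L / len L' ≤ 4 * (mass u L / len L) := by
      rw [heq4, div_le_div_iff₀ hL'p hLp]
      nlinarith
    linarith

lemma sgm_vanish {p : ℝ} {k : ℕ} (hk : 3 ≤ k) (ch : ℝ × ℝ → Bool) {n : ℕ} {K : ℝ × ℝ}
    (hK : K ∈ Kfam k n) {x : ℝ} (hx : x ∈ ivSet K)
    (hside : x < K.1 + len K / 4 ∨ K.2 - len K / 4 ≤ x) : sgm p k ch x = 0 := by
  unfold sgm
  rw [wgt_vanish hk ch hK hx hside]
  simp

/-- Lemma 3.4 of the paper (comparison for intervals sharing an endpoint with `K ∈ 𝐊`). -/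
theorem statement3 (p : ℝ) (hp : 1 < p) :
    ∃ C : ℝ, 0 < C ∧ ∀ k : ℕ, 3000 < k → ∀ ch : ℝ × ℝ → Bool, ∀ K ∈ KK k,
      ∀ L : ℝ × ℝ, L.1 < L.2 → ivSet L ⊆ ivSet K → (L.1 = K.1 ∨ L.2 = K.2) →
      ∀ L' : ℝ × ℝ, L'.1 < L'.2 → ivSet L' ⊆ ivSet L → (L'.1 = K.1 ∨ L'.2 = K.2) →
        avg (wgt k ch) L' ≤ C * avg (wgt k ch) L ∧
        avg (sgm p k ch) L' ≤ C * avg (sgm p k ch) L := by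
  refine ⟨4, by norm_num, ?_⟩
  intro k hk ch K hK L hL hLK hLe L' hL' hL'L hL'e
  have hk3 : 3 ≤ k := by omega
  have hk1 : 1 ≤ k := by omega
  obtain ⟨_, ⟨n, rfl⟩, hKn⟩ := hK
  constructor
  · exact avg_le_four hKn (wgt k ch) (wgt_nonneg k ch)
      ((wgt_integrable hk1 ch).integrableOn) (fun x hx hs => wgt_vanish hk3 ch hKn hx hs)
      hL hLK hL' hL'L hL'e
  · have hintc : IntegrableOn (fun _ => (1:ℝ)) (ivSet K) := by
      refine (integrableOn_const_iff (by simp)).2 (Or.inr ?_)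
      show volume (Set.Ico _ _) < ⊤
      rw [Real.volume_Ico]
      exact ENNReal.ofReal_lt_top
    have hints : IntegrableOn (sgm p k ch) (ivSet K) := by
      refine Integrable.mono' hintc (sgm_meas p k ch).aestronglyMeasurable ?_
      refine Filter.Eventually.of_forall fun x => ?_
      rw [Real.norm_of_nonneg (sgm_nonneg p k ch x)]
      exact sgm_le_one hp hk1 ch x
    exact avg_le_four hKn (sgm p k ch) (sgm_nonneg p k ch) hints
      (fun x hx hs => sgm_vanish hk3 ch hKn hx hs) hL hLK hL' hL'L hL'e

end RTpaper
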